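/- Let g : {1,...,⌊n/2⌋} → ℝ be strictly decreasing and strictly convex, and let m with 1 ≤ m ≤ n. Then the set J^0_{n,m} = { ⌊ni/m⌋ : 0 ≤ i < m } ⊆ ℤ/nℤ is a minimizer of E_g on C_n: for every B ⊆ ℤ/nℤ with |B| = m, E_g(J^0_{n,m}) ≤ E_g(B). -/

import Mathlib

/-- Geodesic distance in the cycle `C_n` on vertex set `ℤ/nℤ`. -/
def cycleDist (n : ℕ) (u v : ZMod n) [NeZero n] : ℕ :=
  min (v - u).val (n - (v - u).val)

/-- The `g`-energy of a set of vertices of `C_n`: the sum of `g` of the geodesic distances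
over unordered pairs of distinct vertices. -/
noncomputable def Ecyc (n : ℕ) [NeZero n] (g : ℕ → ℝ) (A : Finset (ZMod n)) : ℝ :=
  (∑ p ∈ A.offDiag, g (cycleDist n p.1 p.2)) / 2

/-- The Clough–Douthett set `J^0_{n,m} = { ⌊ni/m⌋ : 0 ≤ i < m } ⊆ ℤ/nℤ`. -/
def J0set (n m : ℕ) : Finset (ZMod n) :=
  (Finset.range m).image (fun i => ((n * i / m : ℕ) : ZMod n))

namespace CD
open Finset
open Fin.NatCast

set_option linter.unusedSectionVars false
set_option linter.unusedVariables false

/-! ### The folded energy function and its convexity -/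

variable {n : ℕ} {g : ℕ → ℝ}

/-- folded energy function -/
noncomputable def hf (n : ℕ) (g : ℕ → ℝ) (t : ℕ) : ℝ := g (min t (n - t))

lemma hf_left {t : ℕ} (ht : 1 ≤ t) (h2 : 2 * (t + 1) ≤ n) :
    hf n g (t + 1) - hf n g t = g (t + 1) - g t := by
  unfold hf
  have h1 : min t (n - t) = t := by omega
  have h2' : min (t + 1) (n - (t + 1)) = t + 1 := by omega
  rw [h1, h2']

lemma hf_right {t : ℕ} (ht : t + 2 ≤ n) (h2 : n ≤ 2 * t) :
    hf n g (t + 1) - hf n g t = -(g ((n - t - 1) + 1) - g (n - t - 1)) := by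
  unfold hf
  have h1 : min t (n - t) = n - t := by omega
  have h2' : min (t + 1) (n - (t + 1)) = n - t - 1 := by omega
  have h3 : (n - t - 1) + 1 = n - t := by omega
  rw [h1, h2', h3]; ring

lemma hf_mid {t : ℕ} (hmid : n = 2 * t + 1) :
    hf n g (t + 1) - hf n g t = 0 := by
  unfold hf
  have h1 : min t (n - t) = t := by omega
  have h2' : min (t + 1) (n - (t + 1)) = t := by omega
  rw [h1, h2']; ring

lemma hf_step_nonpos (hdec : ∀ i : ℕ, 1 ≤ i → i + 1 ≤ n / 2 → g (i + 1) < g i)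
    {t : ℕ} (ht : 1 ≤ t) (h2 : 2 * (t + 1) ≤ n) :
    hf n g (t + 1) - hf n g t ≤ 0 := by
  rw [hf_left ht h2]
  have := hdec t ht (by omega)
  linarith

lemma hf_step_nonneg (hdec : ∀ i : ℕ, 1 ≤ i → i + 1 ≤ n / 2 → g (i + 1) < g i)
    {t : ℕ} (ht : t + 2 ≤ n) (h2 : n ≤ 2 * t) :
    0 ≤ hf n g (t + 1) - hf n g t := by
  rw [hf_right ht h2]
  have := hdec (n - t - 1) (by omega) (by omega)
  linarith

/-- convexity of the folded function -/
lemma hf_convex (hdec : ∀ i : ℕ, 1 ≤ i → i + 1 ≤ n / 2 → g (i + 1) < g i)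
    (hconv : ∀ i j : ℕ, 1 ≤ i → i < j → j + 1 ≤ n / 2 →
      g (i + 1) - g i < g (j + 1) - g j)
    {a b : ℕ} (ha : 1 ≤ a) (hab : a ≤ b) (hb : b + 2 ≤ n) :
    hf n g (a + 1) - hf n g a ≤ hf n g (b + 1) - hf n g b := by
  rcases eq_or_lt_of_le hab with rfl | hab'
  · exact le_rfl
  rcases le_or_gt (2 * (b + 1)) n with hbL | hbR
  · have haL : 2 * (a + 1) ≤ n := by omega
    rw [hf_left ha haL, hf_left (by omega) hbL]
    exact le_of_lt (hconv a b ha hab' (by omega))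
  rcases le_or_gt n (2 * b) with hbRt | hbMid
  · have hstep_b := hf_step_nonneg (g := g) hdec hb hbRt
    rcases le_or_gt (2 * (a + 1)) n with haL | haR
    · have := hf_step_nonpos (g := g) hdec ha haL
      linarith
    rcases le_or_gt n (2 * a) with haRt | haMid
    · rw [hf_right (by omega) haRt, hf_right hb hbRt]
      have h1 : n - b - 1 ≤ n - a - 1 := by omega
      rcases eq_or_lt_of_le h1 with heq | hlt
      · rw [heq]
      · have := hconv (n - b - 1) (n - a - 1) (by omega) hlt (by omega)
        linarith
    · have : n = 2 * a + 1 := by omega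
      rw [hf_mid this]
      linarith
  · have hbm : n = 2 * b + 1 := by omega
    rw [hf_mid hbm]
    have haL : 2 * (a + 1) ≤ n := by omega
    exact hf_step_nonpos (g := g) hdec ha haL

/-! ### Jensen-type lemmas -/

variable {h : ℕ → ℝ}

/-- pointwise line bound for a discretely convex function -/
lemma line_bound (hcv : ∀ a b : ℕ, 1 ≤ a → a ≤ b → b + 2 ≤ n →
      h (a + 1) - h a ≤ h (b + 1) - h b)
    {q ℓ : ℕ} (hq : 1 ≤ q) (hqn : q + 2 ≤ n) (hl1 : 1 ≤ ℓ) (hln : ℓ + 1 ≤ n) :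
    h q + ((ℓ : ℝ) - (q : ℝ)) * (h (q + 1) - h q) ≤ h ℓ := by
  set s : ℝ := h (q + 1) - h q with hs
  rcases le_total q ℓ with hql | hlq
  · have key : ∀ d : ℕ, q + d + 1 ≤ n → h q + (d : ℝ) * s ≤ h (q + d) := by
      intro d
      induction d with
      | zero => intro _; simp
      | succ d ih =>
        intro hd
        have ih' := ih (by omega)
        have hstep : s ≤ h (q + d + 1) - h (q + d) := hcv q (q + d) hq (by omega) (by omega)
        have : q + (d + 1) = (q + d) + 1 := by omega
        rw [this]
        push_cast
        linarith
    have := key (ℓ - q) (by omega)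
    have hEq : q + (ℓ - q) = ℓ := by omega
    rw [hEq] at this
    have hc : ((ℓ - q : ℕ) : ℝ) = (ℓ : ℝ) - (q : ℝ) := by
      push_cast [Nat.cast_sub hql]; ring
    rw [hc] at this
    linarith
  · have key : ∀ d : ℕ, d + 1 ≤ q → h q - (d : ℝ) * s ≤ h (q - d) := by
      intro d
      induction d with
      | zero => intro _; simp
      | succ d ih =>
        intro hd
        have ih' := ih (by omega)
        set t := q - d - 1 with ht
        have h1 : t + 1 = q - d := by omega
        have hstep : h (t + 1) - h t ≤ s := hcv t q (by omega) (by omega) hqn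
        have h2 : q - (d + 1) = t := by omega
        rw [h2]
        push_cast
        rw [h1] at hstep
        linarith
    have := key (q - ℓ) (by omega)
    have hEq : q - (q - ℓ) = ℓ := by omega
    rw [hEq] at this
    have hc : ((q - ℓ : ℕ) : ℝ) = (q : ℝ) - (ℓ : ℝ) := by
      push_cast [Nat.cast_sub hlq]; ring
    rw [hc] at this
    linarith

/-- Jensen: lower bound for sum of convex function values with fixed sum. -/
lemma jensen_sum {m : ℕ} (hcv : ∀ a b : ℕ, 1 ≤ a → a ≤ b → b + 2 ≤ n →
      h (a + 1) - h a ≤ h (b + 1) - h b)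
    (ℓ : Fin m → ℕ) (hb : ∀ i, 1 ≤ ℓ i ∧ ℓ i + 1 ≤ n)
    {q r : ℕ} (hq : 1 ≤ q) (hqn : q + 2 ≤ n) (hr : r < m)
    (hsum : ∑ i, ℓ i = q * m + r) :
    ((m : ℝ) - r) * h q + (r : ℝ) * h (q + 1) ≤ ∑ i, h (ℓ i) := by
  set s : ℝ := h (q + 1) - h q with hs
  have pointwise : ∀ i, h q + ((ℓ i : ℝ) - (q : ℝ)) * s ≤ h (ℓ i) := fun i =>
    line_bound hcv hq hqn (hb i).1 (hb i).2
  have hsum' : (∑ i, ((ℓ i : ℝ))) = q * m + r := by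
    rw [← Nat.cast_sum, hsum]; push_cast; ring
  have := Finset.sum_le_sum (fun i (_ : i ∈ univ) => pointwise i)
  rw [Finset.sum_add_distrib] at this
  simp only [Finset.sum_const, card_univ, Fintype.card_fin, nsmul_eq_mul] at this
  rw [← Finset.sum_mul, Finset.sum_sub_distrib, hsum'] at this
  simp only [Finset.sum_const, card_univ, Fintype.card_fin, nsmul_eq_mul] at this
  have : (m : ℝ) * h q + ((q * m + r) - m * q) * s ≤ ∑ i, h (ℓ i) := by linarith
  have hexp : (m : ℝ) * h q + ((q * m + r) - m * q) * s
      = ((m : ℝ) - r) * h q + (r : ℝ) * h (q + 1) := by rw [hs]; ring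
  linarith

/-- exact value when all values are q or q+1 -/
lemma balanced_sum {m q r : ℕ} (h : ℕ → ℝ) (ℓ : Fin m → ℕ)
    (hv : ∀ i, ℓ i = q ∨ ℓ i = q + 1)
    (hsum : ∑ i, ℓ i = q * m + r) :
    ∑ i, h (ℓ i) = ((m : ℝ) - r) * h q + (r : ℝ) * h (q + 1) := by
  classical
  rw [mul_comm q m] at hsum
  set T := univ.filter (fun i : Fin m => ℓ i = q + 1) with hT
  have hval : ∀ i, ℓ i = q + (if ℓ i = q + 1 then 1 else 0) := by
    intro i; rcases hv i with hh | hh <;> simp [hh]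
  have hcard : T.card = r := by
    have h2 : ∑ i, ℓ i = ∑ i : Fin m, (q + (if ℓ i = q + 1 then 1 else 0)) :=
      Finset.sum_congr rfl (fun i _ => hval i)
    rw [Finset.sum_add_distrib, Finset.sum_const, Finset.sum_boole] at h2
    simp only [card_univ, Fintype.card_fin, smul_eq_mul, mul_one, Nat.cast_id] at h2
    rw [hsum] at h2
    rw [hT]
    omega
  have hrm : r ≤ m := by
    have h4 := card_filter_le (univ : Finset (Fin m)) (fun i => ℓ i = q + 1)
    simp only [card_univ, Fintype.card_fin] at h4
    rw [← hT] at h4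
    omega
  have hterm : ∀ i : Fin m, h (ℓ i) = if ℓ i = q + 1 then h (q + 1) else h q := by
    intro i; rcases hv i with hh | hh <;> simp [hh]
  rw [Finset.sum_congr rfl (fun i _ => hterm i), Finset.sum_ite, Finset.sum_const,
    Finset.sum_const]
  have hcard2 : (univ.filter (fun i : Fin m => ¬(ℓ i = q + 1))).card = m - r := by
    have h3 := Finset.card_filter_add_card_filter_not
      (s := (univ : Finset (Fin m))) (p := fun i => ℓ i = q + 1)
    simp only [card_univ, Fintype.card_fin] at h3
    rw [← hT] at h3
    omega
  rw [← hT, hcard, hcard2]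
  have hms : ((m - r : ℕ) : ℝ) = (m : ℝ) - r := by
    push_cast [Nat.cast_sub hrm]; ring
  simp only [nsmul_eq_mul, hms]
  ring

/-- all values equal when the sum is maximal -/
lemma all_eq_of_sum {m C : ℕ} (ℓ : Fin m → ℕ) (hub : ∀ i, ℓ i ≤ C)
    (hsum : ∑ i, ℓ i = m * C) (i : Fin m) : ℓ i = C := by
  by_contra hne
  have hlt : ℓ i < C := lt_of_le_of_ne (hub i) hne
  have h2 : ∑ j, ℓ j < ∑ _j : Fin m, C :=
    Finset.sum_lt_sum (fun j _ => hub j) ⟨i, mem_univ i, hlt⟩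
  rw [Finset.sum_const, card_univ, Fintype.card_fin, smul_eq_mul] at h2
  omega

/-! ### step distances -/

variable (n) (m : ℕ) [NeZero n] [NeZero m]

/-- the k-step distance sequence of a set given by an enumeration c -/
def dd (c : Fin m → ℕ) (k : ℕ) (i : Fin m) : ℕ :=
  (((c (i + (k : Fin m)) : ℕ) : ZMod n) - ((c i : ℕ) : ZMod n)).val

variable {n m}

lemma mod_helper {a b : ℕ} (h1 : b ≤ a) (h2 : a < 2 * b) : a % b = a - b := by
  rw [Nat.mod_eq_sub_mod h1, Nat.mod_eq_of_lt (by omega)]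

lemma fin_add_val {k : ℕ} (hk : k < m) (i : Fin m) :
    (i + (k : Fin m)).val = (i.val + k) % m := by
  rw [Fin.add_def, Fin.val_natCast, Nat.mod_eq_of_lt hk]

lemma zmod_sub_val_of_le {a b : ℕ} (hb : b < n) (hab : a ≤ b) :
    ((b : ZMod n) - (a : ZMod n)).val = b - a := by
  rw [← Nat.cast_sub hab, ZMod.val_cast_of_lt (by omega)]

lemma zmod_sub_val_of_gt {a b : ℕ} (ha : a < n) (hab : b < a) :
    ((b : ZMod n) - (a : ZMod n)).val = n + b - a := by
  have h1 : ((b : ZMod n) - (a : ZMod n)) = (((n + b - a : ℕ) : ℕ) : ZMod n) := by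
    push_cast [Nat.cast_sub (by omega : a ≤ n + b)]
    simp [ZMod.natCast_self]
  rw [h1, ZMod.val_cast_of_lt (by omega)]

variable {c : Fin m → ℕ}

/-- explicit formula for dd -/
lemma dd_eq (hmono : StrictMono c) (hlt : ∀ i, c i < n)
    {k : ℕ} (hk1 : 1 ≤ k) (hkm : k < m) (i : Fin m) :
    dd n m c k i = if i.val + k < m then c (i + (k : Fin m)) - c i
      else n + c (i + (k : Fin m)) - c i := by
  set j := i + (k : Fin m) with hj
  have hjv : j.val = (i.val + k) % m := fin_add_val hkm i
  unfold dd
  split_ifs with hc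
  · have hij : i < j := by
      rw [Fin.lt_def, hjv, Nat.mod_eq_of_lt hc]; omega
    exact zmod_sub_val_of_le (hlt j) (le_of_lt (hmono hij))
  · have hji : j < i := by
      rw [Fin.lt_def, hjv]
      rw [mod_helper (by omega) (by have := i.isLt; omega)]; omega
    exact zmod_sub_val_of_gt (hlt i) (hmono hji)

lemma dd_pos (hmono : StrictMono c) (hlt : ∀ i, c i < n)
    {k : ℕ} (hk1 : 1 ≤ k) (hkm : k < m) (i : Fin m) : 1 ≤ dd n m c k i := by
  rw [dd_eq hmono hlt hk1 hkm i]
  set j := i + (k : Fin m) with hj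
  have hjv : j.val = (i.val + k) % m := fin_add_val hkm i
  split_ifs with hc
  · have hij : i < j := by
      rw [Fin.lt_def, hjv, Nat.mod_eq_of_lt hc]; omega
    have := hmono hij; omega
  · have := hlt i; omega

lemma dd_lt (i : Fin m) (k : ℕ) : dd n m c k i < n := ZMod.val_lt _

/-- integer formula -/
lemma dd_int (hmono : StrictMono c) (hlt : ∀ i, c i < n)
    {k : ℕ} (hk1 : 1 ≤ k) (hkm : k < m) (i : Fin m) :
    (dd n m c k i : ℤ) = (c (i + (k : Fin m)) : ℤ) - c i
      + (if i.val + k < m then (0:ℤ) else (n:ℤ)) := by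
  rw [dd_eq hmono hlt hk1 hkm i]
  set j := i + (k : Fin m) with hj
  have hjv : j.val = (i.val + k) % m := fin_add_val hkm i
  split_ifs with hc
  · have hij : i < j := by
      rw [Fin.lt_def, hjv, Nat.mod_eq_of_lt hc]; omega
    have := hmono hij
    omega
  · have hji : j < i := by
      rw [Fin.lt_def, hjv]
      rw [mod_helper (by omega) (by have := i.isLt; omega)]; omega
    have := hmono hji
    have := hlt i
    omega

/-- the sum of the k-step distances is k * n -/
lemma dd_sum (hmono : StrictMono c) (hlt : ∀ i, c i < n)
    {k : ℕ} (hk1 : 1 ≤ k) (hkm : k < m) :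
    ∑ i, dd n m c k i = k * n := by
  have hint : (∑ i, (dd n m c k i : ℤ)) = (k : ℤ) * n := by
    rw [Finset.sum_congr rfl (fun i _ => dd_int hmono hlt hk1 hkm i)]
    rw [Finset.sum_add_distrib, Finset.sum_sub_distrib]
    have hperm : ∑ i : Fin m, (c (i + (k : Fin m)) : ℤ) = ∑ i : Fin m, (c i : ℤ) :=
      Fintype.sum_equiv (Equiv.addRight (k : Fin m)) _ _ (fun i => rfl)
    rw [hperm, sub_self, zero_add]
    have hconv : ∑ i : Fin m, (if i.val + k < m then (0:ℤ) else n)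
        = ∑ x ∈ range m, (if x + k < m then (0:ℤ) else n) :=
      Fin.sum_univ_eq_sum_range (fun x => if x + k < m then (0:ℤ) else n) m
    rw [hconv]
    rw [Finset.range_eq_Ico,
      ← Finset.sum_Ico_consecutive _ (by omega : 0 ≤ m - k) (by omega : m - k ≤ m)]
    have h1 : ∑ x ∈ Finset.Ico 0 (m - k), (if x + k < m then (0:ℤ) else n) = 0 := by
      apply Finset.sum_eq_zero
      intro x hx
      rw [Finset.mem_Ico] at hx
      rw [if_pos (by omega)]
    have h2 : ∑ x ∈ Finset.Ico (m - k) m, (if x + k < m then (0:ℤ) else n) = k * n := by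
      rw [Finset.sum_congr rfl (fun x hx => if_neg (by rw [Finset.mem_Ico] at hx; omega))]
      rw [Finset.sum_const, Nat.card_Ico]
      have : m - (m - k) = k := by omega
      rw [this]; push_cast; ring
    rw [h1, h2, zero_add]
  exact_mod_cast hint

/-! ### decomposition of the energy sum -/

/-- decomposition of the off-diagonal energy sum into step classes -/
lemma energy_decomp (g : ℕ → ℝ) (hmono : StrictMono c) (hlt : ∀ i, c i < n) :
    ∑ p ∈ ((univ.image (fun i : Fin m => ((c i : ℕ) : ZMod n))).offDiag),
        g (min (p.2 - p.1).val (n - (p.2 - p.1).val))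
      = ∑ k ∈ Finset.Ico 1 m, ∑ i : Fin m, hf n g (dd n m c k i) := by
  classical
  set F : Fin m → ZMod n := fun i => ((c i : ℕ) : ZMod n) with hF
  have hFinj : Function.Injective F := by
    intro a b hab
    have : c a = c b := by
      have := congrArg ZMod.val hab
      rwa [ZMod.val_cast_of_lt (hlt a), ZMod.val_cast_of_lt (hlt b)] at this
    exact hmono.injective this
  have step1 : ∑ p ∈ ((univ.image F).offDiag),
        g (min (p.2 - p.1).val (n - (p.2 - p.1).val))
      = ∑ p ∈ (univ : Finset (Fin m)).offDiag,
        g (min ((F p.2 - F p.1).val) (n - (F p.2 - F p.1).val)) := by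
    refine (Finset.sum_bij (fun p _ => (F p.1, F p.2)) ?_ ?_ ?_ ?_).symm
    · intro p hp
      rw [Finset.mem_offDiag] at hp ⊢
      exact ⟨mem_image_of_mem F (mem_univ _), mem_image_of_mem F (mem_univ _),
        fun h => hp.2.2 (hFinj h)⟩
    · intro p hp q hq hpq
      have h1 := congrArg Prod.fst hpq
      have h2 := congrArg Prod.snd hpq
      simp only at h1 h2
      exact Prod.ext (hFinj h1) (hFinj h2)
    · intro q hq
      rw [Finset.mem_offDiag] at hq
      obtain ⟨a, _, ha⟩ := Finset.mem_image.1 hq.1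
      obtain ⟨b, _, hb⟩ := Finset.mem_image.1 hq.2.1
      refine ⟨(a, b), Finset.mem_offDiag.2 ⟨mem_univ _, mem_univ _, ?_⟩, ?_⟩
      · intro h
        simp only at h
        exact hq.2.2 (by rw [← ha, ← hb, h])
      · simp [ha, hb]
    · intro p hp
      rfl
  rw [step1]
  have step2 : ∑ p ∈ (univ : Finset (Fin m)).offDiag,
        g (min ((F p.2 - F p.1).val) (n - (F p.2 - F p.1).val))
      = ∑ q ∈ (Finset.Ico 1 m) ×ˢ (univ : Finset (Fin m)),
        g (min ((F (q.2 + (q.1 : Fin m)) - F q.2).val)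
            (n - (F (q.2 + (q.1 : Fin m)) - F q.2).val)) := by
    refine Finset.sum_nbij' (fun p => (((p.2 - p.1 : Fin m)).val, p.1))
      (fun q => (q.2, q.2 + (q.1 : Fin m))) ?_ ?_ ?_ ?_ ?_
    · intro p hp
      rw [Finset.mem_offDiag] at hp
      rw [Finset.mem_product, Finset.mem_Ico]
      refine ⟨⟨?_, Fin.is_lt _⟩, mem_univ _⟩
      have hne : p.2 - p.1 ≠ 0 := sub_ne_zero_of_ne (Ne.symm hp.2.2)
      have hval : (p.2 - p.1).val ≠ 0 := by
        intro h0
        exact hne (Fin.val_injective (by rw [h0, Fin.val_zero]))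
      omega
    · intro q hq
      rw [Finset.mem_product, Finset.mem_Ico] at hq
      rw [Finset.mem_offDiag]
      refine ⟨mem_univ _, mem_univ _, ?_⟩
      intro h
      have : (q.1 : Fin m) = 0 := by
        have := congrArg (fun x => x - q.2) h
        simpa [add_sub_cancel_left] using this.symm
      have hv := congrArg Fin.val this
      rw [Fin.val_natCast, Nat.mod_eq_of_lt hq.1.2] at hv
      simp at hv
      omega
    · intro p hp
      dsimp only
      rw [Fin.cast_val_eq_self]
      ext
      · rfl
      · simp [add_comm, sub_add_cancel]
    · intro q hq
      rw [Finset.mem_product, Finset.mem_Ico] at hq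
      dsimp only
      rw [add_sub_cancel_left, Fin.val_natCast, Nat.mod_eq_of_lt hq.1.2]
    · intro p hp
      dsimp only
      have : F (p.1 + (((p.2 - p.1 : Fin m)).val : Fin m)) = F p.2 := by
        rw [Fin.cast_val_eq_self]
        congr 1
        rw [add_comm, sub_add_cancel]
      rw [this]
  rw [step2, Finset.sum_product]
  rfl

/-! ### the J0 enumeration -/

variable (n m) in
/-- the canonical enumeration of J0 -/
def cJ (i : Fin m) : ℕ := n * i.val / m

lemma cJ_mono (hmn : m ≤ n) : StrictMono (cJ n m) := by
  intro i j hij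
  have h1 : n * i.val + m ≤ n * j.val := by
    have hstep : i.val + 1 ≤ j.val := hij
    calc n * i.val + m ≤ n * i.val + n := by omega
    _ = n * (i.val + 1) := by ring
    _ ≤ n * j.val := Nat.mul_le_mul_left n hstep
  have h2 : (n * i.val + m) / m ≤ n * j.val / m := Nat.div_le_div_right h1
  rw [Nat.add_div_right _ (Nat.pos_of_ne_zero (NeZero.ne m))] at h2
  unfold cJ
  omega

lemma cJ_lt (hmn : m ≤ n) (i : Fin m) : cJ n m i < n := by
  unfold cJ
  have hm : 0 < m := Nat.pos_of_ne_zero (NeZero.ne m)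
  rw [Nat.div_lt_iff_lt_mul hm]
  have hstep : i.val + 1 ≤ m := i.isLt
  have hn : 0 < n := Nat.pos_of_ne_zero (NeZero.ne n)
  calc n * i.val < n * i.val + n := by omega
  _ = n * (i.val + 1) := by ring
  _ ≤ n * m := Nat.mul_le_mul_left n hstep

lemma J0_image : (univ : Finset (Fin m)).image (fun i => ((cJ n m i : ℕ) : ZMod n))
    = J0set n m := by
  ext x
  simp only [Finset.mem_image, J0set, Finset.mem_range, mem_univ, true_and, cJ]
  constructor
  · rintro ⟨i, hi⟩
    exact ⟨i.val, i.isLt, hi⟩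
  · rintro ⟨i, hi, hx⟩
    exact ⟨⟨i, hi⟩, hx⟩

/-- dd values of J0 are q or q+1 -/
lemma dd_cJ (hmn : m ≤ n) {k : ℕ} (hk1 : 1 ≤ k) (hkm : k < m) (i : Fin m) :
    dd n m (cJ n m) k i = n * k / m ∨ dd n m (cJ n m) k i = n * k / m + 1 := by
  have hm : 0 < m := Nat.pos_of_ne_zero (NeZero.ne m)
  have hjv := fin_add_val hkm i
  have hadd := Nat.add_div (a := n * i.val) (b := n * k) hm
  have hdist : n * (i.val + k) = n * i.val + n * k := by ring
  rw [← hdist] at hadd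
  have hA : cJ n m i = n * i.val / m := rfl
  rw [dd_eq (cJ_mono hmn) (cJ_lt hmn) hk1 hkm i]
  split_ifs with hc
  · have hcj : cJ n m (i + (k : Fin m)) = n * (i.val + k) / m := by
      unfold cJ; rw [hjv, Nat.mod_eq_of_lt hc]
    rw [hcj, hA]
    set S := n * (i.val + k) / m with hS
    set A := n * i.val / m with hA'
    set Q := n * k / m with hQ
    clear_value S A Q
    split_ifs at hadd <;> omega
  · have hjv2 : (i + (k : Fin m)).val = i.val + k - m := by
      rw [hjv, mod_helper (by omega) (by have := i.isLt; omega)]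
    have hcj : n + cJ n m (i + (k : Fin m)) = n * (i.val + k) / m := by
      unfold cJ; rw [hjv2]
      have h4 : (i.val + k - m) + m = i.val + k := by omega
      have h3 : n * (i.val + k) = n * (i.val + k - m) + n * m := by
        calc n * (i.val + k) = n * ((i.val + k - m) + m) := by rw [h4]
        _ = n * (i.val + k - m) + n * m := by ring
      rw [h3, Nat.add_mul_div_right _ _ hm]
      exact Nat.add_comm n _
    rw [hA]
    set S := n * (i.val + k) / m with hS
    set A := n * i.val / m with hA'
    set Q := n * k / m with hQ
    set T := cJ n m (i + (k : Fin m)) with hT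
    clear_value S A Q T
    split_ifs at hadd <;> omega

end CD

open Finset in
/-- If `g : {1,...,⌊n/2⌋} → ℝ` is strictly decreasing and strictly convex, then
`J^0_{n,m}` is a minimizer of `E_g` on `C_n` among `m`-element vertex sets. -/
theorem stmt_18 (n m : ℕ) [NeZero n] (hm : 1 ≤ m) (hmn : m ≤ n) (g : ℕ → ℝ)
    (hdec : ∀ i : ℕ, 1 ≤ i → i + 1 ≤ n / 2 → g (i + 1) < g i)
    (hconv : ∀ i j : ℕ, 1 ≤ i → i < j → j + 1 ≤ n / 2 →
      g (i + 1) - g i < g (j + 1) - g j) :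
    ∀ B : Finset (ZMod n), B.card = m → Ecyc n g (J0set n m) ≤ Ecyc n g B := by
  classical
  intro B hB
  haveI : NeZero m := ⟨Nat.one_le_iff_ne_zero.1 hm⟩
  have hn0 : 0 < n := Nat.pos_of_ne_zero (NeZero.ne n)
  have hm0 : 0 < m := Nat.pos_of_ne_zero (NeZero.ne m)
  -- J0 side
  have hJ : Ecyc n g (J0set n m)
      = (∑ k ∈ Ico 1 m, ∑ i : Fin m, CD.hf n g (CD.dd n m (CD.cJ n m) k i)) / 2 := by
    rw [← CD.J0_image]
    simp only [Ecyc, cycleDist]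
    rw [CD.energy_decomp g (CD.cJ_mono hmn) (CD.cJ_lt hmn)]
  -- B side: monotone enumeration
  set V := B.image ZMod.val with hV
  have hVcard : V.card = m := by
    rw [hV, Finset.card_image_of_injective B (ZMod.val_injective n), hB]
  set e := V.orderIsoOfFin hVcard with he
  set cB : Fin m → ℕ := fun i => (e i : ℕ) with hcB
  have monoB : StrictMono cB := fun i j hij => by
    have := e.strictMono hij
    exact_mod_cast this
  have ltB : ∀ i, cB i < n := by
    intro i
    have hmem : (cB i) ∈ V := (e i).2
    rw [hV] at hmem
    obtain ⟨b, _, hb⟩ := Finset.mem_image.1 hmem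
    rw [← hb]
    exact ZMod.val_lt b
  have himB : (univ : Finset (Fin m)).image (fun i => ((cB i : ℕ) : ZMod n)) = B := by
    ext x
    simp only [Finset.mem_image, mem_univ, true_and]
    constructor
    · rintro ⟨i, hi⟩
      have hmem : (cB i) ∈ V := (e i).2
      rw [hV] at hmem
      obtain ⟨b, hbB, hb⟩ := Finset.mem_image.1 hmem
      have hcast : ((cB i : ℕ) : ZMod n) = b := by
        rw [← hb]
        exact ZMod.natCast_rightInverse b
      rw [← hi, hcast]
      exact hbB
    · intro hxB
      have hmem : x.val ∈ V := by rw [hV]; exact Finset.mem_image_of_mem _ hxB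
      obtain ⟨i, hi⟩ := e.surjective ⟨x.val, hmem⟩
      refine ⟨i, ?_⟩
      have : cB i = x.val := by rw [hcB]; simp [hi]
      rw [this]
      exact ZMod.natCast_rightInverse x
  have hBd : Ecyc n g B
      = (∑ k ∈ Ico 1 m, ∑ i : Fin m, CD.hf n g (CD.dd n m cB k i)) / 2 := by
    conv_lhs => rw [← himB]
    simp only [Ecyc, cycleDist]
    rw [CD.energy_decomp g monoB ltB]
  rw [hJ, hBd]
  have hmain : ∑ k ∈ Ico 1 m, ∑ i : Fin m, CD.hf n g (CD.dd n m (CD.cJ n m) k i)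
      ≤ ∑ k ∈ Ico 1 m, ∑ i : Fin m, CD.hf n g (CD.dd n m cB k i) := by
    apply Finset.sum_le_sum
    intro k hk
    rw [Finset.mem_Ico] at hk
    obtain ⟨hk1, hkm⟩ := hk
    have hdm := Nat.div_add_mod (n * k) m
    have hnk : n ≤ n * k := Nat.le_mul_of_pos_right n (by omega)
    have hq1 : 1 ≤ n * k / m := (Nat.one_le_div_iff hm0).2 (le_trans hmn hnk)
    have hrm : n * k % m < m := Nat.mod_lt _ hm0
    have hqlt : n * k / m < n := by
      rw [Nat.div_lt_iff_lt_mul hm0]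
      have h6 : n * (k + 1) ≤ n * m := Nat.mul_le_mul_left n (by omega)
      have h7 : n * (k + 1) = n * k + n := by ring
      omega
    set q := n * k / m with hq
    set r := n * k % m with hr
    have hcomm : k * n = n * k := mul_comm k n
    have hcomm2 : m * q = q * m := mul_comm m q
    have hsumJ : ∑ i, CD.dd n m (CD.cJ n m) k i = q * m + r := by
      rw [CD.dd_sum (CD.cJ_mono hmn) (CD.cJ_lt hmn) hk1 hkm]
      omega
    have hsumB : ∑ i, CD.dd n m cB k i = q * m + r := by
      rw [CD.dd_sum monoB ltB hk1 hkm]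
      omega
    have hJk : ∑ i, CD.hf n g (CD.dd n m (CD.cJ n m) k i)
        = ((m : ℝ) - r) * CD.hf n g q + (r : ℝ) * CD.hf n g (q + 1) :=
      CD.balanced_sum (CD.hf n g) _ (fun i => CD.dd_cJ hmn hk1 hkm i) hsumJ
    rcases le_or_gt (q + 2) n with hcase | hcase
    · rw [hJk]
      exact CD.jensen_sum (fun a b ha hab hb => CD.hf_convex hdec hconv ha hab hb)
        _ (fun i => ⟨CD.dd_pos monoB ltB hk1 hkm i, by have := CD.dd_lt (n := n) (c := cB) i k; omega⟩)
        hq1 hcase hrm hsumB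
    · -- edge case : q = n - 1
      have hqe : q = n - 1 := by omega
      have hmn1 : m * (n - 1) + m = m * n := by
        have h4 : n - 1 + 1 = n := by omega
        calc m * (n - 1) + m = m * ((n - 1) + 1) := by ring
        _ = m * n := by rw [h4]
      have hub : n * k + m ≤ m * n := by
        have h6 : n * k + n ≤ n * m := by
          calc n * k + n = n * (k + 1) := by ring
          _ ≤ n * m := Nat.mul_le_mul_left n (by omega)
        have h7 : n * m = m * n := mul_comm n m
        omega
      have hmq : m * q = m * (n - 1) := by rw [hqe]
      have hkey : n * k = m * (n - 1) ∧ r = 0 := by omega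
      have hallJ : ∀ i, CD.dd n m (CD.cJ n m) k i = n - 1 :=
        CD.all_eq_of_sum _ (fun i => by have := CD.dd_lt (n := n) (c := CD.cJ n m) i k; omega)
          (by rw [CD.dd_sum (CD.cJ_mono hmn) (CD.cJ_lt hmn) hk1 hkm]; omega)
      have hallB : ∀ i, CD.dd n m cB k i = n - 1 :=
        CD.all_eq_of_sum _ (fun i => by have := CD.dd_lt (n := n) (c := cB) i k; omega)
          (by rw [CD.dd_sum monoB ltB hk1 hkm]; omega)
      have hl : ∑ i, CD.hf n g (CD.dd n m (CD.cJ n m) k i)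
          = ∑ i : Fin m, CD.hf n g (n - 1) :=
        Finset.sum_congr rfl (fun i _ => by rw [hallJ i])
      have hrr : ∑ i, CD.hf n g (CD.dd n m cB k i)
          = ∑ i : Fin m, CD.hf n g (n - 1) :=
        Finset.sum_congr rfl (fun i _ => by rw [hallB i])
      rw [hl, hrr]
  linarith
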